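/- Every interval graph G has a path decomposition whose set of bags is exactly the set of maximal cliques of G; in particular, every bag of this path decomposition is a clique of G. -/

import Mathlib

def IsIntervalGraph {V : Type*} (G : SimpleGraph V) : Prop :=
  ∃ l r : V → ℝ, (∀ v, l v ≤ r v) ∧
    ∀ u v, u ≠ v → (G.Adj u v ↔ (Set.Icc (l u) (r u) ∩ Set.Icc (l v) (r v)).Nonempty)

/-- `B : Fin r → Set V` is a path decomposition of `G`. -/
def IsPathDecomp {V : Type*} (G : SimpleGraph V) {r : ℕ} (B : Fin r → Set V) : Prop :=
  (∀ v : V, ∃ i, v ∈ B i) ∧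
  (∀ u v : V, G.Adj u v → ∃ i, u ∈ B i ∧ v ∈ B i) ∧
  (∀ (v : V) (i j l : Fin r), i ≤ j → j ≤ l → v ∈ B i → v ∈ B l → v ∈ B j)

/-- Any clique in a graph on a finite vertex type extends to a maximal clique. -/
lemma exists_maximal_clique {V : Type*} [Fintype V] (G : SimpleGraph V) (C : Set V)
    (hC : G.IsClique C) : ∃ M, C ⊆ M ∧ Maximal G.IsClique M := by
  classical
  obtain ⟨M, hM, hmax⟩ := Set.Finite.exists_maximalFor id
    {S : Set V | G.IsClique S ∧ C ⊆ S} (Set.toFinite _) ⟨C, hC, subset_rfl⟩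
  refine ⟨M, hM.2, hM.1, fun b hb hle => ?_⟩
  have := hmax (j := b) ⟨hb, hM.2.trans hle⟩ hle
  simp only [id] at this
  exact this.ge

/-- Every interval graph has a path decomposition whose set of bags is exactly the set of
maximal cliques; in particular every bag is a clique. -/
theorem stmt10 {V : Type*} [Fintype V] (G : SimpleGraph V) (h : IsIntervalGraph G) :
    ∃ (r : ℕ) (B : Fin r → Set V), IsPathDecomp G B ∧
      Set.range B = {S : Set V | Maximal G.IsClique S} ∧
      ∀ i, G.IsClique (B i) := by
  classical
  obtain ⟨l, rr, hlr, hadj⟩ := h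
  -- For every maximal clique C there is a point x with v ∈ C ↔ x ∈ [l v, rr v].
  have key : ∀ C : Set V, Maximal G.IsClique C →
      ∃ x : ℝ, ∀ v, v ∈ C ↔ x ∈ Set.Icc (l v) (rr v) := by
    intro C hC
    -- first find a common point of the intervals of C (Helly)
    have hcom : ∃ x : ℝ, ∀ v ∈ C, x ∈ Set.Icc (l v) (rr v) := by
      rcases C.eq_empty_or_nonempty with rfl | hne
      · exact ⟨0, by simp⟩
      · have hfin : C.Finite := Set.toFinite _
        obtain ⟨u, huC, hu⟩ := hfin.exists_maximalFor l C hne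
        refine ⟨l u, fun v hv => ⟨?_, ?_⟩⟩
        · by_contra hlt
          push_neg at hlt
          exact absurd (hu hv hlt.le) (not_le.mpr hlt)
        · rcases eq_or_ne u v with rfl | huv
          · exact hlr u
          · have hadjuv := hC.1 huC hv huv
            obtain ⟨y, hy1, hy2⟩ := (hadj u v huv).mp hadjuv
            exact le_trans hy1.1 hy2.2
    obtain ⟨x, hx⟩ := hcom
    refine ⟨x, fun v => ⟨hx v, fun hv => ?_⟩⟩
    -- maximality: x in interval of v ⇒ v ∈ C
    have hclique : G.IsClique (C ∪ {v}) := by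
      intro a ha b hb hab
      rcases ha with ha | ha
      · rcases hb with hb | hb
        · exact hC.1 ha hb hab
        · rcases hb with rfl
          exact (hadj a b hab).mpr ⟨x, hx a ha, hv⟩
      · rcases ha with rfl
        rcases hb with hb | hb
        · exact ((hadj b a hab.symm).mpr ⟨x, hx b hb, hv⟩).symm
        · rcases hb with rfl
          exact absurd rfl hab
    have := hC.2 hclique Set.subset_union_left
    exact this (Set.mem_union_right _ rfl)
  -- choose such a point for each maximal clique
  choose! x hxspec using key
  -- the finset of maximal cliques
  let s : Finset (Set V) := Set.toFinset {S : Set V | Maximal G.IsClique S}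
  have hmem : ∀ S, S ∈ s ↔ Maximal G.IsClique S := by
    intro S; simp [s, Set.mem_toFinset]
  -- x is injective on s
  have hinjOn : Set.InjOn x s := by
    intro a ha b hb hxab
    have ha' := hxspec a ((hmem a).mp ha)
    have hb' := hxspec b ((hmem b).mp hb)
    ext v; rw [ha' v, hb' v, hxab]
  let t : Finset ℝ := s.image x
  have htcard : t.card = s.card := Finset.card_image_of_injOn hinjOn
  let f : Fin s.card ≃o t := t.orderIsoOfFin htcard
  set B : Fin s.card → Set V :=
    fun i => {v | (f i : ℝ) ∈ Set.Icc (l v) (rr v)} with hB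
  -- each bag equals a maximal clique
  have hbag : ∀ i : Fin s.card, ∃ C, Maximal G.IsClique C ∧ B i = C := by
    intro i
    have : (f i : ℝ) ∈ t := (f i).2
    obtain ⟨C, hCs, hxC⟩ := Finset.mem_image.mp this
    have hCmax := (hmem C).mp hCs
    refine ⟨C, hCmax, ?_⟩
    ext v
    simp only [hB, Set.mem_setOf_eq]
    rw [← hxC, ← hxspec C hCmax v]
  -- each maximal clique is a bag
  have hbag' : ∀ C, Maximal G.IsClique C → ∃ i, B i = C := by
    intro C hCmax
    have hxt : x C ∈ t := Finset.mem_image_of_mem x ((hmem C).mpr hCmax)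
    refine ⟨f.symm ⟨x C, hxt⟩, ?_⟩
    ext v
    simp only [hB, Set.mem_setOf_eq]
    have : (f (f.symm ⟨x C, hxt⟩) : ℝ) = x C := by
      rw [f.apply_symm_apply]
    rw [this, ← hxspec C hCmax v]
  refine ⟨s.card, B, ⟨?_, ?_, ?_⟩, ?_, ?_⟩
  · -- every vertex in some bag
    intro v
    obtain ⟨M, hvM, hMmax⟩ := exists_maximal_clique G {v} (G.isClique_singleton v)
    obtain ⟨i, hi⟩ := hbag' M hMmax
    exact ⟨i, hi ▸ hvM rfl⟩
  · -- every edge in some bag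
    intro u v huv
    obtain ⟨M, hM, hMmax⟩ := exists_maximal_clique G {u, v}
      (SimpleGraph.isClique_pair.mpr (fun _ => huv))
    obtain ⟨i, hi⟩ := hbag' M hMmax
    exact ⟨i, hi ▸ hM (by simp), hi ▸ hM (by simp)⟩
  · -- interval property
    intro v i j k hij hjk hvi hvk
    simp only [hB, Set.mem_setOf_eq, Set.mem_Icc] at *
    have h1 : (f i : ℝ) ≤ (f j : ℝ) := f.monotone hij
    have h2 : (f j : ℝ) ≤ (f k : ℝ) := f.monotone hjk
    exact ⟨le_trans hvi.1 h1, le_trans h2 hvk.2⟩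
  · -- range = maximal cliques
    ext S
    simp only [Set.mem_range, Set.mem_setOf_eq]
    constructor
    · rintro ⟨i, rfl⟩
      obtain ⟨C, hC, hBC⟩ := hbag i
      exact hBC ▸ hC
    · intro hS
      obtain ⟨i, hi⟩ := hbag' S hS
      exact ⟨i, hi⟩
  · -- every bag is a clique
    intro i
    obtain ⟨C, hC, hBC⟩ := hbag i
    exact hBC ▸ hC.1
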